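/- Let K be a differential field with derivation D and field of constants C, and let a₁, a₂, b ∈ K with D(a₁) ≠ 0, D(a₂) ≠ 0 and D(b) ≠ 0. Assume f(a₁, b) = 0. Then f(a₂, b) = 0 if and only if there exist constants p, q, r, s ∈ C with p·s − q·r ≠ 0 and r·a₁ + s ≠ 0 such that a₂ = (p·a₁ + q)/(r·a₁ + s), i.e. a₂ is obtained from a₁ by a fractional linear transformation with invertible matrix of coefficients in C. -/

import Mathlib

/-- The Schwarzian derivative of `y` with respect to a derivation `δ`:
`S_δ(y) = δ³(y)/δ(y) − (3/2)·(δ²(y)/δ(y))²`. -/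
noncomputable def schwarzian {K : Type*} [Field K] (δ : K → K) (y : K) : K :=
  δ (δ (δ y)) / δ y - (3 / 2) * (δ (δ y) / δ y) ^ 2

/-- The rational function `R` appearing in the differential equation of the `j`-function. -/
noncomputable def jRat {K : Type*} [Field K] (y : K) : K :=
  (y ^ 2 - 1968 * y + 2654208) / (2 * y ^ 2 * (y - 1728) ^ 2)

/-- The two-variable form of the differential equation of the `j`-function:
`f(x, y) = S_{∂ₓ}(y) + R(y)·(∂ₓ(y))²` where `∂ₓ(y) = D y / D x`. -/
noncomputable def jEq {K : Type*} [Field K] (D : K → K) (x y : K) : K :=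
  schwarzian (fun u => D u / D x) y + jRat y * (D y / D x) ^ 2

section
set_option linter.unusedSectionVars false
variable {K : Type*} [Field K] [CharZero K]

lemma der_zero (D : K → K) (hadd : ∀ u v, D (u + v) = D u + D v) : D 0 = 0 := by
  have h := hadd 0 0; rw [add_zero] at h; linear_combination -h

lemma der_neg (D : K → K) (hadd : ∀ u v, D (u + v) = D u + D v) (u : K) :
    D (-u) = -D u := by
  have h := hadd u (-u); rw [add_neg_cancel, der_zero D hadd] at h; linear_combination -h

lemma der_sub (D : K → K) (hadd : ∀ u v, D (u + v) = D u + D v) (u v : K) :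
    D (u - v) = D u - D v := by
  rw [sub_eq_add_neg, hadd, der_neg D hadd, sub_eq_add_neg]

lemma der_one (D : K → K) (hmul : ∀ u v, D (u * v) = u * D v + v * D u) : D 1 = 0 := by
  have h := hmul 1 1; rw [mul_one, one_mul] at h; linear_combination -h

lemma der_two (D : K → K) (hadd : ∀ u v, D (u + v) = D u + D v)
    (hmul : ∀ u v, D (u * v) = u * D v + v * D u) : D 2 = 0 := by
  have h := hadd 1 1; rw [der_one D hmul] at h; norm_num at h; exact h

lemma der_const_mul (D : K → K) (hmul : ∀ u v, D (u * v) = u * D v + v * D u)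
    {c : K} (hc : D c = 0) (u : K) : D (c * u) = c * D u := by
  rw [hmul, hc, mul_zero, add_zero]

lemma der_div (D : K → K) (hadd : ∀ u v, D (u + v) = D u + D v)
    (hmul : ∀ u v, D (u * v) = u * D v + v * D u)
    (u : K) {v : K} (hv : v ≠ 0) : D (u / v) = (v * D u - u * D v) / v ^ 2 := by
  have h := hmul (u / v) v
  rw [div_mul_cancel₀ u hv] at h
  have h3 : v * (u / v) = u := mul_div_cancel₀ u hv
  rw [eq_div_iff (pow_ne_zero 2 hv)]
  linear_combination -v * h - D v * h3

lemma der_sq (D : K → K) (hmul : ∀ u v, D (u * v) = u * D v + v * D u) (u : K) :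
    D (u ^ 2) = 2 * u * D u := by
  rw [pow_two, hmul]; ring


lemma schw_aux (X X2 X3 Y Y2 Y3 : K) (hX : X ≠ 0) (hY : Y ≠ 0) :
    (X^2*X*(X*Y3 - Y*X3) - (X*Y2 - Y*X2)*(3*X^2*X2))/(X^2*X)^2/Y - 3/2*((X*Y2-Y*X2)/X^2/Y)^2
      = (Y3/Y - 3/2*(Y2/Y)^2 - (X3/X - 3/2*(X2/X)^2))/X^2 := by
  have h2 : (2:K) ≠ 0 := two_ne_zero
  have hX2 : X^2 ≠ 0 := pow_ne_zero 2 hX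
  have hY2 : Y^2 ≠ 0 := pow_ne_zero 2 hY
  have d1 : (X^2*X)^2*Y ≠ 0 := mul_ne_zero (pow_ne_zero 2 (mul_ne_zero hX2 hX)) hY
  have d2 : 2*(X^2*Y)^2 ≠ 0 := mul_ne_zero h2 (pow_ne_zero 2 (mul_ne_zero hX2 hY))
  have d3 : 2*Y^2 ≠ 0 := mul_ne_zero h2 hY2
  have d4 : 2*X^2 ≠ 0 := mul_ne_zero h2 hX2
  have d5 : Y*(2*Y^2) ≠ 0 := mul_ne_zero hY d3
  have d6 : X*(2*X^2) ≠ 0 := mul_ne_zero hX d4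
  rw [div_div, div_div, div_pow, div_mul_div_comm,
      div_sub_div _ _ d1 d2,
      div_pow Y2 Y, div_mul_div_comm, div_sub_div _ _ hY d3,
      div_pow X2 X, div_mul_div_comm, div_sub_div _ _ hX d4,
      div_sub_div _ _ d5 d6, div_div,
      div_eq_div_iff (mul_ne_zero d1 d2) (mul_ne_zero (mul_ne_zero d5 d6) hX2)]
  ring

/-- `σ(y) = D³y/Dy − (3/2)(D²y/Dy)²`. -/
noncomputable def sig (D : K → K) (y : K) : K :=
  D (D (D y)) / D y - (3 / 2) * (D (D y) / D y) ^ 2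

lemma schw_formula (D : K → K) (hadd : ∀ u v, D (u + v) = D u + D v)
    (hmul : ∀ u v, D (u * v) = u * D v + v * D u)
    {x y : K} (hx : D x ≠ 0) (hy : D y ≠ 0) :
    schwarzian (fun u => D u / D x) y = (sig D y - sig D x) / D x ^ 2 := by
  have h2 : D (D y / D x) = (D x * D (D y) - D y * D (D x)) / D x ^ 2 :=
    der_div D hadd hmul _ hx
  have hx3 : D x ^ 2 * D x ≠ 0 := mul_ne_zero (pow_ne_zero 2 hx) hx
  have hnum : D (D x * D (D y) - D y * D (D x))
      = D x * D (D (D y)) - D y * D (D (D x)) := by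
    rw [der_sub D hadd, hmul, hmul]; ring
  have hden : D (D x ^ 2 * D x) = 3 * D x ^ 2 * D (D x) := by
    rw [hmul, der_sq D hmul]; ring
  have h3 : D (D (D y / D x) / D x)
      = ((D x ^ 2 * D x) * (D x * D (D (D y)) - D y * D (D (D x)))
          - (D x * D (D y) - D y * D (D x)) * (3 * D x ^ 2 * D (D x)))
        / (D x ^ 2 * D x) ^ 2 := by
    rw [h2, div_div, der_div D hadd hmul _ hx3, hnum, hden]
  have e1 : ∀ u : K, u / D x / (D y / D x) = u / D y := by
    intro u
    rw [div_div_div_cancel_right₀]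
    exact hx
  simp only [schwarzian, sig, e1]
  rw [h3, h2]
  exact schw_aux (D x) (D (D x)) (D (D (D x))) (D y) (D (D y)) (D (D (D y))) hx hy

lemma jEq_zero_iff (D : K → K) (hadd : ∀ u v, D (u + v) = D u + D v)
    (hmul : ∀ u v, D (u * v) = u * D v + v * D u)
    {x b : K} (hx : D x ≠ 0) (hb : D b ≠ 0) :
    jEq D x b = 0 ↔ sig D x = sig D b + jRat b * D b ^ 2 := by
  have hx2 : D x ^ 2 ≠ 0 := pow_ne_zero 2 hx
  rw [jEq, schw_formula D hadd hmul hx hb, div_pow, ← mul_div_assoc,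
    ← add_div, div_eq_zero_iff]
  simp only [hx2, or_false]
  constructor <;> intro h <;> linear_combination -h
lemma ratio_aux3 (a C X E : K) (hC : C ≠ 0) (hE : E ≠ 0) :
    C * a / E ^ 3 / (C * X / E ^ 2) = a / (E * X) := by
  rw [div_div_div_comm, mul_div_mul_left _ _ hC,
    show E ^ 3 / E ^ 2 = E by
      rw [pow_succ, mul_div_cancel_left₀ _ (pow_ne_zero 2 hE)],
    div_div, mul_comm X E]

lemma ratio_aux4 (a C X E : K) (hC : C ≠ 0) (hE : E ≠ 0) :
    C * a / E ^ 4 / (C * X / E ^ 2) = a / (E ^ 2 * X) := by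
  rw [div_div_div_comm, mul_div_mul_left _ _ hC,
    show E ^ 4 / E ^ 2 = E ^ 2 by
      rw [show (4:ℕ) = 2 + 2 from rfl, pow_add,
        mul_div_cancel_left₀ _ (pow_ne_zero 2 hE)],
    div_div, mul_comm X (E ^ 2)]

lemma sig_aux (X X2 X3 E R : K) (hX : X ≠ 0) (hE : E ≠ 0) :
    (E ^ 2 * X3 - 6 * R * E * X * X2 + 6 * R ^ 2 * X ^ 3) / (E ^ 2 * X)
      - 3 / 2 * ((E * X2 - 2 * R * X ^ 2) / (E * X)) ^ 2
      = X3 / X - 3 / 2 * (X2 / X) ^ 2 := by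
  have h2 : (2:K) ≠ 0 := two_ne_zero
  have d1 : E ^ 2 * X ≠ 0 := mul_ne_zero (pow_ne_zero 2 hE) hX
  have d2 : 2 * (E * X) ^ 2 ≠ 0 := mul_ne_zero h2 (pow_ne_zero 2 (mul_ne_zero hE hX))
  have d3 : 2 * X ^ 2 ≠ 0 := mul_ne_zero h2 (pow_ne_zero 2 hX)
  rw [div_pow, div_mul_div_comm, div_sub_div _ _ d1 d2,
    div_pow X2 X, div_mul_div_comm, div_sub_div _ _ hX d3,
    div_eq_div_iff (mul_ne_zero d1 d2) (mul_ne_zero hX d3)]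
  ring

lemma sig_mobius (D : K → K) (hadd : ∀ u v, D (u + v) = D u + D v)
    (hmul : ∀ u v, D (u * v) = u * D v + v * D u)
    {x p q r s : K} (hx : D x ≠ 0) (hp : D p = 0) (hq : D q = 0) (hr : D r = 0)
    (hs : D s = 0) (hdet : p * s - q * r ≠ 0) (he : r * x + s ≠ 0) :
    sig D ((p * x + q) / (r * x + s)) = sig D x := by
  have hde : D (r * x + s) = r * D x := by
    rw [hadd, der_const_mul D hmul hr, hs, add_zero]
  have hdk : D (p * s - q * r) = 0 := by
    rw [der_sub D hadd, hmul, hmul, hp, hq, hr, hs]; ring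
  have hnum : D (p * x + q) = p * D x := by
    rw [hadd, der_const_mul D hmul hp, hq, add_zero]
  have h2r : D (2 * r) = 0 := by
    rw [hmul, hr, der_two D hadd hmul]; ring
  have he2 : (r * x + s) ^ 2 ≠ 0 := pow_ne_zero 2 he
  have h1 : D ((p * x + q) / (r * x + s))
      = (p * s - q * r) * D x / (r * x + s) ^ 2 := by
    rw [der_div D hadd hmul _ he, hnum, hde,
      div_eq_div_iff he2 he2]
    ring
  have h2 : D ((p * s - q * r) * D x / (r * x + s) ^ 2)
      = (p * s - q * r) * ((r * x + s) * D (D x) - 2 * r * D x ^ 2)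
        / (r * x + s) ^ 3 := by
    rw [der_div D hadd hmul _ he2, der_const_mul D hmul hdk, der_sq D hmul, hde,
      div_eq_div_iff (pow_ne_zero 2 he2) (pow_ne_zero 3 he)]
    ring
  have h3 : D ((p * s - q * r) * ((r * x + s) * D (D x) - 2 * r * D x ^ 2)
        / (r * x + s) ^ 3)
      = (p * s - q * r) * ((r * x + s) ^ 2 * D (D (D x))
          - 6 * r * (r * x + s) * D x * D (D x) + 6 * r ^ 2 * D x ^ 3)
        / (r * x + s) ^ 4 := by
    have hin : D ((r * x + s) * D (D x) - 2 * r * D x ^ 2)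
        = r * D x * D (D x) + (r * x + s) * D (D (D x))
          - 2 * r * (2 * D x * D (D x)) := by
      rw [der_sub D hadd, hmul, hde, der_const_mul D hmul h2r, der_sq D hmul]
      ring
    have he3 : (r * x + s) ^ 3 ≠ 0 := pow_ne_zero 3 he
    have hde3 : D ((r * x + s) ^ 3) = 3 * (r * x + s) ^ 2 * (r * D x) := by
      rw [pow_succ, hmul, der_sq D hmul, hde]; ring
    rw [der_div D hadd hmul _ he3, der_const_mul D hmul hdk, hin, hde3,
      div_eq_div_iff (pow_ne_zero 2 he3) (pow_ne_zero 4 he)]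
    ring
  simp only [sig]
  rw [h1, h2, h3, ratio_aux3 _ _ _ _ hdet he, ratio_aux4 _ _ _ _ hdet he]
  exact sig_aux (D x) (D (D x)) (D (D (D x))) (r * x + s) r hx he
lemma exists_mobius_aux (P : K → K) (hadd : ∀ u v, P (u + v) = P u + P v)
    (hmul : ∀ u v, P (u * v) = u * P v + v * P u)
    {x y : K} (hx1 : P x = 1) (hy : P y ≠ 0)
    (key : 2 * (P (P (P y)) * P y) = 3 * P (P y) ^ 2) :
    ∃ p q r s : K, P p = 0 ∧ P q = 0 ∧ P r = 0 ∧ P s = 0 ∧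
      p * s - q * r ≠ 0 ∧ r * x + s ≠ 0 ∧ y = (p * x + q) / (r * x + s) := by
  by_cases h2 : P (P y) = 0
  · refine ⟨P y, y - P y * x, 0, 1, h2, ?_, der_zero P hadd, der_one P hmul,
      ?_, ?_, ?_⟩
    · rw [der_sub P hadd, hmul, h2, hx1]; ring
    · simpa using hy
    · simp
    · rw [zero_mul, zero_add, div_one]; ring
  · have hP2 : P 2 = 0 := der_two P hadd hmul
    obtain ⟨c, hcdef⟩ : ∃ c : K, c = x + 2 * P y / P (P y) := ⟨_, rfl⟩
    have hδc : P c = 0 := by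
      rw [hcdef, hadd, hx1, der_div P hadd hmul _ h2, der_const_mul P hmul hP2]
      field_simp
      linear_combination -key
    have hxc : x - c = -(2 * P y / P (P y)) := by rw [hcdef]; ring
    have hxcne : x - c ≠ 0 := by
      rw [hxc]
      exact neg_ne_zero.mpr (div_ne_zero (mul_ne_zero two_ne_zero hy) h2)
    obtain ⟨k, hkdef⟩ : ∃ k : K, k = P y * (x - c) ^ 2 := ⟨_, rfl⟩
    have hkne : k ≠ 0 := hkdef ▸ mul_ne_zero hy (pow_ne_zero 2 hxcne)
    have hδxc : P (x - c) = 1 := by rw [der_sub P hadd, hx1, hδc, sub_zero]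
    have hδk : P k = 0 := by
      rw [hkdef, hmul, der_sq P hmul, hδxc, hxc]
      field_simp
      ring
    obtain ⟨m, hmdef⟩ : ∃ m : K, m = y + k / (x - c) := ⟨_, rfl⟩
    have hδm : P m = 0 := by
      rw [hmdef, hadd, der_div P hadd hmul _ hxcne, hδk, hδxc, hkdef]
      field_simp
      ring
    refine ⟨m, -(c * m) - k, 1, -c, hδm, ?_, der_one P hmul, ?_, ?_, ?_, ?_⟩
    · rw [der_sub P hadd, der_neg P hadd, hmul, hδm, hδc, hδk]; ring
    · rw [der_neg P hadd, hδc, neg_zero]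
    · rw [show m * -c - (-(c * m) - k) * 1 = k by ring]; exact hkne
    · rw [show (1:K) * x + -c = x - c by ring]; exact hxcne
    · rw [show (1:K) * x + -c = x - c by ring, eq_div_iff hxcne]
      have hcan : k / (x - c) * (x - c) = k := div_mul_cancel₀ _ hxcne
      rw [hmdef]
      linear_combination -hcan
lemma exists_mobius (D : K → K) (hadd : ∀ u v, D (u + v) = D u + D v)
    (hmul : ∀ u v, D (u * v) = u * D v + v * D u)
    {x y : K} (hx : D x ≠ 0) (hy : D y ≠ 0) (hsig : sig D y = sig D x) :
    ∃ p q r s : K, D p = 0 ∧ D q = 0 ∧ D r = 0 ∧ D s = 0 ∧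
      p * s - q * r ≠ 0 ∧ r * x + s ≠ 0 ∧ y = (p * x + q) / (r * x + s) := by
  obtain ⟨δ, hδ⟩ : ∃ δ : K → K, δ = fun u => D u / D x := ⟨_, rfl⟩
  have δu : ∀ u, δ u = D u / D x := fun u => by rw [hδ]
  have δadd : ∀ u v, δ (u + v) = δ u + δ v := by
    intro u v; rw [δu, δu, δu, hadd, add_div]
  have δmul : ∀ u v, δ (u * v) = u * δ v + v * δ u := by
    intro u v; rw [δu, δu, δu, hmul, add_div, mul_div_assoc, mul_div_assoc]
  have δx : δ x = 1 := by rw [δu]; exact div_self hx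
  have δy : δ y ≠ 0 := by rw [δu]; exact div_ne_zero hy hx
  have hs0 : schwarzian δ y = 0 := by
    rw [hδ, schw_formula D hadd hmul hx hy, hsig, sub_self, zero_div]
  have key : 2 * (δ (δ (δ y)) * δ y) = 3 * δ (δ y) ^ 2 := by
    rw [schwarzian] at hs0
    field_simp [δy] at hs0
    have h' : δ y * (2 * (δ (δ (δ y)) * δ y) - 3 * δ (δ y) ^ 2) = 0 := by
      linear_combination δ y * hs0
    rcases mul_eq_zero.mp h' with h | h
    · exact absurd h δy
    · linear_combination h
  obtain ⟨p, q, r, s, hp, hq, hr, hs, hdet, hne, heq⟩ :=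
    exists_mobius_aux δ δadd δmul δx δy key
  have conv : ∀ u, δ u = 0 → D u = 0 := by
    intro u h
    rw [δu] at h
    rcases div_eq_zero_iff.mp h with h | h
    · exact h
    · exact absurd h hx
  exact ⟨p, q, r, s, conv p hp, conv q hq, conv r hr, conv s hs, hdet, hne, heq⟩
end

/-- Given a non-constant solution `(a₁, b)` of the differential equation of `j`,
`(a₂, b)` is a solution if and only if `a₂` is obtained from `a₁` by a fractional
linear transformation with invertible matrix of coefficients in the constants. -/
theorem jEq_fibre {K : Type*} [Field K] [CharZero K] (D : K → K)
    (hadd : ∀ u v, D (u + v) = D u + D v)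
    (hmul : ∀ u v, D (u * v) = u * D v + v * D u)
    (a₁ a₂ b : K) (ha₁ : D a₁ ≠ 0) (ha₂ : D a₂ ≠ 0) (hb : D b ≠ 0)
    (h₁ : jEq D a₁ b = 0) :
    jEq D a₂ b = 0 ↔
      ∃ p q r s : K, D p = 0 ∧ D q = 0 ∧ D r = 0 ∧ D s = 0 ∧
        p * s - q * r ≠ 0 ∧ r * a₁ + s ≠ 0 ∧ a₂ = (p * a₁ + q) / (r * a₁ + s) := by
  have h₁' : sig D a₁ = sig D b + jRat b * D b ^ 2 :=
    (jEq_zero_iff D hadd hmul ha₁ hb).mp h₁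
  rw [jEq_zero_iff D hadd hmul ha₂ hb, ← h₁']
  constructor
  · intro h
    exact exists_mobius D hadd hmul ha₁ ha₂ h
  · rintro ⟨p, q, r, s, hp, hq, hr, hs, hdet, hne, heq⟩
    rw [heq]
    exact sig_mobius D hadd hmul ha₁ hp hq hr hs hdet hne
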